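/- The penultimate-matrix reformulation: for a sparse tensor T with nonzero element set E, the l-th row of the mode-n unfolding of the TTM-chain Z = T ×_1 F_1ᵀ ×···×_{n−1} F_{n−1}ᵀ ×_{n+1} F_{n+1}ᵀ ×···×_N F_Nᵀ equals the sum, over elements e in the mode-n slice with n-th coordinate l, of val(e) times the (vectorized) Kronecker product of the factor-matrix rows indexed by the other N−1 coordinates of e. -/

import Mathlib

/-- The full coordinate vector obtained from a mode-`n` index `i` together with
a mode-`n` fiber index `c` (the remaining `N−1` coordinates). -/
def setCoord {N : ℕ} {L : Fin N → ℕ} (n : Fin N) (i : Fin (L n))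
    (c : ∀ j : {j : Fin N // j ≠ n}, Fin (L j.1)) : ∀ j : Fin N, Fin (L j) :=
  fun j => if h : j = n then h.symm ▸ i else c ⟨j, h⟩

lemma setCoord_ne {N : ℕ} {L : Fin N → ℕ} (n : Fin N) (i : Fin (L n))
    (c : ∀ j : {j : Fin N // j ≠ n}, Fin (L j.1)) (j : {j : Fin N // j ≠ n}) :
    setCoord n i c j.1 = c j := by
  simp [setCoord, j.2]

lemma setCoord_eq {N : ℕ} {L : Fin N → ℕ} (n : Fin N) (i : Fin (L n))
    (c : ∀ j : {j : Fin N // j ≠ n}, Fin (L j.1)) :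
    setCoord n i c n = i := by
  simp [setCoord]

/-- penultimate-matrix reformulation: for a sparse tensor `T` supported on
the finite set `E` of nonzero elements (with values `val`), the `l`-th row of the mode-`n`
unfolding of the TTM-chain `Z = T ×₁ F₁ᵀ ×⋯×_{n−1} F_{n−1}ᵀ ×_{n+1} F_{n+1}ᵀ ×⋯×_N F_Nᵀ`
(columns indexed by `k : Π_{j≠n} Fin (K j)`) equals the sum, over the elements `e` in the
mode-`n` slice with `n`-th coordinate `l`, of `val e` times the (vectorized) Kronecker
product of the factor-matrix rows indexed by the other `N−1` coordinates of `e`. -/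
theorem stmt16 {N : ℕ} (L K : Fin N → ℕ) (n : Fin N)
    (F : ∀ j : Fin N, Matrix (Fin (L j)) (Fin (K j)) ℝ)
    (E : Finset (∀ j : Fin N, Fin (L j))) (val : (∀ j : Fin N, Fin (L j)) → ℝ)
    (T : (∀ j : Fin N, Fin (L j)) → ℝ)
    (hT : ∀ c, T c = if c ∈ E then val c else 0) :
    ∀ (l : Fin (L n)) (k : ∀ j : {j : Fin N // j ≠ n}, Fin (K j.1)),
      -- entry (l, k) of the mode-n unfolding of the TTM-chain Z
      (∑ c : ∀ j : {j : Fin N // j ≠ n}, Fin (L j.1),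
          T (setCoord n l c) * ∏ j : {j : Fin N // j ≠ n}, F j.1 (c j) (k j))
      =
      -- sum of contributions contr_n(e) over the mode-n slice with coordinate l
      ∑ e ∈ E.filter (fun e => e n = l),
          val e * ∏ j : {j : Fin N // j ≠ n}, F j.1 (e j.1) (k j) := by
  intro l k
  simp only [hT, ite_mul, zero_mul]
  rw [Finset.sum_ite, Finset.sum_const_zero, add_zero]
  have key : ∀ e : ∀ j : Fin N, Fin (L j), e n = l →
      setCoord n l (fun j : {j : Fin N // j ≠ n} => e j.1) = e := by
    intro e he
    funext j
    by_cases h : j = n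
    · subst h; rw [setCoord_eq, he]
    · exact setCoord_ne n l _ ⟨j, h⟩
  refine Finset.sum_nbij' (fun c => setCoord n l c) (fun e j => e j.1) ?_ ?_ ?_ ?_ ?_
  · intro c hc
    simp only [Finset.mem_filter, Finset.mem_univ, true_and] at hc ⊢
    exact ⟨hc, setCoord_eq n l c⟩
  · intro e he
    simp only [Finset.mem_filter, Finset.mem_univ, true_and] at he ⊢
    rw [key e he.2]; exact he.1
  · intro c _
    funext j
    exact setCoord_ne n l c j
  · intro e he
    simp only [Finset.mem_filter] at he
    exact key e he.2
  · intro c _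
    congr 1
    exact Finset.prod_congr rfl fun j _ => congrArg (fun x => F j.1 x (k j)) (setCoord_ne n l c j).symm
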